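/- (Gaussian elimination) Let A and B be ℤ-graded objects in an additive category, and let C be a cochain complex whose degree-n object is Aⁿ ⊕ Bⁿ, with differential having matrix components a : Aⁿ → Aⁿ⁺¹, b : Bⁿ → Aⁿ⁺¹, c : Aⁿ → Bⁿ⁺¹ and e : Bⁿ → Bⁿ⁺¹. Assume e ∘ e = 0 and that the complex (B, e) is contractible, with a null-homotopy h satisfying e∘h + h∘e = id_B and h∘h = 0. Then a − b∘h∘c is a differential on A (its square is zero), and the maps π = (id_A, −b∘h), σ = (id_A; −h∘c) and H = (0, 0; 0, h) constitute the data of a deformation retract from C onto the cochain complex A' = (A, a − b∘h∘c). -/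

import Mathlib

open CategoryTheory CategoryTheory.Limits CochainComplex CochainComplex.HomComplex

/-- The data of a deformation retract from a `ℤ`-indexed cochain complex `M` onto a cochain
complex `N`: chain maps `π : M ⟶ N` and `σ : N ⟶ M` together with a degree `-1` graded map
`H` on `M` such that `π ∘ σ = id`, `id_M - σ ∘ π = d ∘ H + H ∘ d`, `π ∘ H = 0` and
`H ∘ σ = 0`. -/
structure DeformationRetract {C : Type*} [Category C] [Preadditive C]
    (M N : CochainComplex C ℤ) where
  π : M ⟶ N
  σ : N ⟶ M
  H : Cochain M M (-1)
  retract : σ ≫ π = 𝟙 N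
  homotopy : δ (-1) 0 H = Cochain.ofHom (𝟙 M) - Cochain.ofHom (π ≫ σ)
  H_π : H.comp (Cochain.ofHom π) (add_zero (-1)) = 0
  σ_H : (Cochain.ofHom σ).comp H (zero_add (-1)) = 0

/-- The degree `+1` map on the graded object `n ↦ Aⁿ ⊞ Bⁿ` given in matrix form by
`(a, b; c, e)`. -/
noncomputable def gaussD {C : Type*} [Category C] [Preadditive C] [HasBinaryBiproducts C]
    (A B : ℤ → C) (a : ∀ n, A n ⟶ A (n + 1)) (b : ∀ n, B n ⟶ A (n + 1))
    (c : ∀ n, A n ⟶ B (n + 1)) (e : ∀ n, B n ⟶ B (n + 1)) (n : ℤ) :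
    A n ⊞ B n ⟶ A (n + 1) ⊞ B (n + 1) :=
  biprod.desc (biprod.lift (a n) (c n)) (biprod.lift (b n) (e n))

section GaussianAux

set_option linter.unusedSectionVars false

variable {C : Type*} [Category C] [Preadditive C]
variable (A B : ℤ → C) (b : ∀ n, B n ⟶ A (n + 1)) (h : ∀ n, B (n + 1) ⟶ B n)

/-- `h p` with source reindexed. -/
def gH (p q : ℤ) (hpq : p + 1 = q) : B q ⟶ B p :=
  eqToHom (by rw [← hpq]) ≫ h p

/-- `h p ≫ b p` with both ends reindexed. -/
def gHB (p q : ℤ) (hpq : p + 1 = q) : B q ⟶ A q :=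
  gH B h p q hpq ≫ b p ≫ eqToHom (by rw [hpq])

@[simp] lemma gH_succ (n : ℤ) (hp : n + 1 = n + 1) : gH B h n (n + 1) hp = h n := by
  simp [gH]

@[simp] lemma gHB_succ (n : ℤ) (hp : n + 1 = n + 1) : gHB A B b h n (n + 1) hp = h n ≫ b n := by
  simp [gHB, gH]

end GaussianAux

theorem gaussian_elimination
    {C : Type*} [Category C] [Preadditive C] [HasBinaryBiproducts C]
    (A B : ℤ → C) (a : ∀ n, A n ⟶ A (n + 1)) (b : ∀ n, B n ⟶ A (n + 1))
    (c : ∀ n, A n ⟶ B (n + 1)) (e : ∀ n, B n ⟶ B (n + 1))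
    (h : ∀ n, B (n + 1) ⟶ B n)
    (sqM : ∀ n, gaussD A B a b c e n ≫ gaussD A B a b c e (n + 1) = 0)
    (hee : ∀ n, e n ≫ e (n + 1) = 0)
    (hnull : ∀ n, h n ≫ e n + e (n + 1) ≫ h (n + 1) = 𝟙 (B (n + 1)))
    (hhh : ∀ n, h (n + 1) ≫ h n = 0) :
    (∀ n, (a n - c n ≫ h n ≫ b n) ≫ (a (n + 1) - c (n + 1) ≫ h (n + 1) ≫ b (n + 1)) = 0) ∧
    (∀ sqN : ∀ n, (a n - c n ≫ h n ≫ b n) ≫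
        (a (n + 1) - c (n + 1) ≫ h (n + 1) ≫ b (n + 1)) = 0,
      ∃ ret : DeformationRetract
          (CochainComplex.of (fun n => A n ⊞ B n) (gaussD A B a b c e) sqM)
          (CochainComplex.of A (fun n => a n - c n ≫ h n ≫ b n) sqN),
        (∀ n, ret.π.f (n + 1) = biprod.desc (𝟙 (A (n + 1))) (-(h n ≫ b n))) ∧
        (∀ n, ret.σ.f n = biprod.lift (𝟙 (A n)) (-(c n ≫ h n))) ∧
        (∀ n, ret.H.v (n + 1) n (by omega) = biprod.snd ≫ h n ≫ biprod.inr)) := by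
  -- component identities of `d ≫ d = 0`
  have sAA : ∀ n, a n ≫ a (n + 1) = -(c n ≫ b (n + 1)) := by
    intro n
    have := congrArg (fun φ => biprod.inl ≫ φ ≫ biprod.fst) (sqM n)
    simp [gaussD] at this
    exact eq_neg_of_add_eq_zero_left this
  have sAB0 : ∀ n, a n ≫ c (n + 1) = -(c n ≫ e (n + 1)) := by
    intro n
    have := congrArg (fun φ => biprod.inl ≫ φ ≫ biprod.snd) (sqM n)
    simp [gaussD] at this
    exact eq_neg_of_add_eq_zero_left this
  have sBA0 : ∀ n, b n ≫ a (n + 1) = -(e n ≫ b (n + 1)) := by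
    intro n
    have := congrArg (fun φ => biprod.inr ≫ φ ≫ biprod.fst) (sqM n)
    simp [gaussD] at this
    exact eq_neg_of_add_eq_zero_left this
  have sBB0 : ∀ n, b n ≫ c (n + 1) = -(e n ≫ e (n + 1)) := by
    intro n
    have := congrArg (fun φ => biprod.inr ≫ φ ≫ biprod.snd) (sqM n)
    simp [gaussD] at this
    exact eq_neg_of_add_eq_zero_left this
  have sAB : ∀ n ⦃Z : C⦄ (g : B (n + 1 + 1) ⟶ Z),
      a n ≫ c (n + 1) ≫ g = -(c n ≫ e (n + 1) ≫ g) := by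
    intro n Z g
    rw [← Category.assoc, sAB0]
    simp
  have sBA : ∀ n ⦃Z : C⦄ (g : A (n + 1 + 1) ⟶ Z),
      b n ≫ a (n + 1) ≫ g = -(e n ≫ b (n + 1) ≫ g) := by
    intro n Z g
    rw [← Category.assoc, sBA0]
    simp
  have sBB : ∀ n ⦃Z : C⦄ (g : B (n + 1 + 1) ⟶ Z),
      b n ≫ c (n + 1) ≫ g = -(e n ≫ e (n + 1) ≫ g) := by
    intro n Z g
    rw [← Category.assoc, sBB0]
    simp
  have hee' : ∀ n ⦃Z : C⦄ (g : B (n + 1 + 1) ⟶ Z), e n ≫ e (n + 1) ≫ g = 0 := by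
    intro n Z g
    rw [← Category.assoc, hee, zero_comp]
  -- the square of the differential on `A`
  have sqN0 : ∀ n, (a n - c n ≫ h n ≫ b n) ≫
      (a (n + 1) - c (n + 1) ≫ h (n + 1) ≫ b (n + 1)) = 0 := by
    intro n
    have key : c n ≫ h n ≫ e n ≫ b (n + 1) + c n ≫ e (n + 1) ≫ h (n + 1) ≫ b (n + 1)
        = c n ≫ b (n + 1) := by
      calc c n ≫ h n ≫ e n ≫ b (n + 1) + c n ≫ e (n + 1) ≫ h (n + 1) ≫ b (n + 1)
          = c n ≫ ((h n ≫ e n + e (n + 1) ≫ h (n + 1)) ≫ b (n + 1)) := by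
            simp [Preadditive.add_comp, Preadditive.comp_add, Category.assoc]
        _ = c n ≫ b (n + 1) := by rw [hnull n]; simp
    simp only [Preadditive.sub_comp, Preadditive.comp_sub, Category.assoc, sAA, sAB, sBA, sBB,
      sAB0, sBA0, sBB0, hee', Preadditive.comp_neg, Preadditive.neg_comp, comp_zero,
      neg_zero, sub_zero]
    rw [← key]
    abel
  refine ⟨sqN0, fun sqN => ?_⟩
  -- auxiliary computations with casts
  have hgH : ∀ p q (hqp : q + 1 = p), h p ≫ gH B h q p hqp = 0 := by
    intro p q hqp
    obtain rfl : p = q + 1 := hqp.symm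
    rw [gH_succ]
    exact hhh q
  have hgHB : ∀ p q (hpq : p + 1 = q), h q ≫ gHB A B b h p q hpq = 0 := by
    intro p q hpq
    obtain rfl : q = p + 1 := hpq.symm
    rw [gHB_succ, ← Category.assoc, hhh p, zero_comp]
  have gHB_d : ∀ p q (hpq : p + 1 = q), gHB A B b h p q hpq ≫ (a q - c q ≫ h q ≫ b q)
      = -b q + e q ≫ h q ≫ b q := by
    intro p q hpq
    obtain rfl : q = p + 1 := hpq.symm
    rw [gHB_succ]
    have h1 : h p ≫ e p = 𝟙 (B (p + 1)) - e (p + 1) ≫ h (p + 1) := by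
      rw [← hnull p]; abel
    have h2 : h p ≫ e p ≫ b (p + 1) = b (p + 1) - e (p + 1) ≫ h (p + 1) ≫ b (p + 1) := by
      rw [← Category.assoc, h1]
      simp [Preadditive.sub_comp]
    simp only [Preadditive.comp_sub, Category.assoc, sBA0, sBB, hee',
      Preadditive.comp_neg, comp_zero, neg_zero, sub_zero, h2]
    abel
  -- the deformation retract
  refine ⟨⟨
    CochainComplex.ofHom
      (fun i => biprod.desc (𝟙 (A i)) (-(gHB A B b h (i - 1) i (by omega)))) ?_,
    CochainComplex.ofHom
      (fun i => biprod.lift (𝟙 (A i)) (-(c i ≫ h i))) ?_,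
    Cochain.mk (fun p q hpq => biprod.snd ≫ gH B h q p (by omega) ≫ biprod.inr),
    ?_, ?_, ?_, ?_⟩, ?_, ?_, ?_⟩
  · -- comm for π
    intro i
    simp only [CochainComplex.of_d]
    apply biprod.hom_ext'
    · simp [gaussD, sub_eq_add_neg]
    · rw [biprod.inr_desc_assoc, Preadditive.neg_comp, gHB_d (i - 1) i (by omega)]
      simp [gaussD]
      abel
  · -- comm for σ
    intro i
    simp only [CochainComplex.of_d]
    apply biprod.hom_ext
    · simp [gaussD]
      abel
    · have key2 : c i ≫ e (i + 1) ≫ h (i + 1) + c i ≫ h i ≫ e i = c i := by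
        calc c i ≫ e (i + 1) ≫ h (i + 1) + c i ≫ h i ≫ e i
            = c i ≫ (h i ≫ e i + e (i + 1) ≫ h (i + 1)) := by
              rw [Preadditive.comp_add]; abel
          _ = c i := by rw [hnull i]; simp
      simp only [gaussD, biprod.lift_desc, Preadditive.neg_comp, Category.assoc,
        biprod.lift_fst, biprod.lift_snd, Preadditive.add_comp, Preadditive.sub_comp,
        Preadditive.comp_neg, Category.comp_id, Category.id_comp, sAB, sBB, hee',
        comp_zero, neg_zero, neg_neg, sub_zero, add_zero, zero_add]
      exact (eq_add_neg_of_add_eq key2).symm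
  · -- retract
    ext n
    simp only [HomologicalComplex.comp_f, HomologicalComplex.id_f]
    rw [biprod.lift_desc]
    simp only [Category.id_comp, Preadditive.neg_comp, Preadditive.comp_neg, neg_neg]
    rw [Category.assoc, hgHB (n - 1) n (by omega)]
    simp
  · -- homotopy
    ext p : 1
    obtain ⟨m, rfl⟩ : ∃ m, m + 1 = p := ⟨p - 1, by omega⟩
    rw [δ_v (-1) 0 (by omega) _ (m + 1) (m + 1) (by omega) m (m + 1 + 1) (by omega) rfl]
    simp only [Cochain.mk_v, Int.negOnePow_zero, one_smul, CochainComplex.of_d,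
      Cochain.sub_v, Cochain.ofHom_v, HomologicalComplex.id_f, HomologicalComplex.comp_f,
      ]
    apply biprod.hom_ext' <;> apply biprod.hom_ext
    · simp [gaussD]
    · simp [gaussD]
    · simp [gaussD]
    · simp only [gaussD, biprod.inr_desc_assoc, biprod.lift_snd, biprod.lift_snd_assoc,
        Category.assoc, sBB, hee', Preadditive.comp_neg, comp_zero, neg_zero, add_zero,
        neg_neg]
      simp [sBB, hee', hnull m]
  · -- H_π
    ext p q hpq : 1
    obtain rfl : p = q + 1 := by omega
    simp only [Cochain.comp_zero_cochain_v, Cochain.mk_v, Cochain.ofHom_v,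
      Cochain.zero_v, gH_succ, Category.assoc]
    rw [biprod.inr_desc]
    simp only [Preadditive.comp_neg]
    rw [hgHB (q - 1) q (by omega)]
    simp
  · -- σ_H
    ext p q hpq : 1
    simp only [Cochain.zero_cochain_comp_v, Cochain.mk_v, Cochain.ofHom_v,
      Cochain.zero_v]
    rw [← Category.assoc, biprod.lift_snd]
    simp only [Preadditive.neg_comp, Category.assoc]
    rw [← Category.assoc (h p), hgH p q (by omega)]
    simp
  · intro n
    simp
  · intro n
    rfl
  · intro n
    simp
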